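/- Let G be a simple graph on n vertices containing no path with l vertices, where l ≥ 2. Then for every integer k with 2 ≤ k ≤ ω(G), the clique counts of G satisfy k·N_k(G) ≤ (l-k)·N_{k-1}(G). -/

import Mathlib

open SimpleGraph List Finset

section Aux

variable {V : Type*} {G : SimpleGraph V}

/-- From a nonempty adjacency-chain list, build a walk with that support. -/
private lemma aux_walk_of_chain : ∀ (xs : List V) (x : V), (x :: xs).Chain' G.Adj →
    ∃ (v : V) (w : G.Walk x v), w.support = x :: xs := by
  intro xs
  induction xs with
  | nil => intro x _; exact ⟨x, SimpleGraph.Walk.nil, rfl⟩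
  | cons y rest ih =>
      intro x hc
      obtain ⟨hadj, hc'⟩ := List.isChain_cons_cons.mp hc
      obtain ⟨v, w, hw⟩ := ih y hc'
      exact ⟨v, SimpleGraph.Walk.cons hadj w, by simp [SimpleGraph.Walk.support_cons, hw]⟩

private lemma aux_no_long_list_path (l : ℕ)
    (hG : ¬ ∃ (u v : V) (p : G.Walk u v), p.IsPath ∧ p.length + 1 = l)
    (hl : 1 ≤ l) :
    ∀ p : List V, p.Chain' G.Adj → p.Nodup → p.length < l := by
  intro p hc hnd
  by_contra h
  push_neg at h
  have hqc : (p.take l).Chain' G.Adj := hc.take l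
  have hqnd : (p.take l).Nodup := hnd.sublist (List.take_sublist l p)
  have hqlen : (p.take l).length = l := by simp [List.length_take]; omega
  rcases hq : p.take l with _ | ⟨x, xs⟩
  · rw [hq] at hqlen; simp at hqlen; omega
  · rw [hq] at hqc hqnd hqlen
    obtain ⟨v, w, hw⟩ := aux_walk_of_chain xs x hqc
    apply hG
    refine ⟨x, v, w, ?_, ?_⟩
    · rw [SimpleGraph.Walk.isPath_def, hw]; exact hqnd
    · have := w.length_support
      rw [hw] at this
      omega

private lemma aux_rotate_path (C : List V) (hch : C.Chain' G.Adj) (hnd : C.Nodup)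
    (hcyc : ∀ x ∈ C.getLast?, ∀ y ∈ C.head?, G.Adj x y)
    (y z : V) (hyC : y ∉ C) (hzC : z ∈ C) (hadj : G.Adj y z) :
    ∃ L : List V, L.Chain' G.Adj ∧ L.Nodup ∧ L.length = C.length + 1 ∧
      ∀ x ∈ L, x = y ∨ x ∈ C := by
  obtain ⟨u, w, hdecomp⟩ := List.append_of_mem hzC
  subst hdecomp
  obtain ⟨hu, hzw, hjun⟩ := List.isChain_append.mp hch
  have hperm : ((z :: w) ++ u).Perm (u ++ (z :: w)) := List.perm_append_comm
  refine ⟨y :: ((z :: w) ++ u), ?_, ?_, by simp; omega, ?_⟩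
  · refine List.isChain_cons.mpr ?_
    constructor
    · intro b hb
      simp only [List.head?_append, List.head?_cons] at hb
      simp only [Option.or_some, Option.some_or, Option.mem_def, Option.some.injEq] at hb
      subst hb; exact hadj
    · rw [List.isChain_append]
      refine ⟨hzw, hu, ?_⟩
      intro a ha b hb
      apply hcyc
      · rw [List.getLast?_append, ha]; simp
      · rw [List.head?_append, hb]; simp
  · rw [List.nodup_cons]
    exact ⟨fun h => hyC (hperm.mem_iff.mp h), hperm.nodup_iff.mpr hnd⟩
  · intro x hx
    rcases List.mem_cons.mp hx with h | h
    · exact Or.inl h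
    · exact Or.inr (hperm.mem_iff.mp h)

private lemma aux_rich_arith (k l a b d : ℕ) (hk : 2 ≤ k) (hlk : k + 1 ≤ l)
    (hrich : (l - k) * a < k * b) (hL2 : (k - 1) * b ≤ (d - (k - 2)) * a) :
    l - 1 ≤ 2 * d := by
  obtain ⟨k', rfl⟩ : ∃ k', k = k' + 2 := ⟨k - 2, by omega⟩
  obtain ⟨c, rfl, hc1⟩ : ∃ c, l = k' + 2 + c ∧ 1 ≤ c := ⟨l - (k' + 2), by omega, by omega⟩
  have hsub1 : k' + 2 + c - (k' + 2) = c := by omega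
  have hsub2 : k' + 2 - 1 = k' + 1 := by omega
  have hsub3 : k' + 2 - 2 = k' := by omega
  rw [hsub1] at hrich
  rw [hsub2, hsub3] at hL2
  rcases Nat.lt_or_ge d k' with hd | hd
  · have : d - k' = 0 := by omega
    rw [this] at hL2
    simp at hL2
    rcases hL2 with h | h <;> omega
  obtain ⟨e, rfl⟩ : ∃ e, d = k' + e := ⟨d - k', by omega⟩
  have hsub4 : k' + e - k' = e := by omega
  rw [hsub4] at hL2
  have ha : 1 ≤ a := by
    by_contra h
    have : a = 0 := by omega
    subst this
    simp at hrich hL2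
    omega
  have key : (k' + 1) * c < (k' + 2) * e := by
    have h1 : (k' + 1) * ((c) * a) < (k' + 1) * ((k' + 2) * b) := by
      exact mul_lt_mul_of_pos_left hrich (by omega)
    have h2 : (k' + 2) * ((k' + 1) * b) ≤ (k' + 2) * (e * a) :=
      Nat.mul_le_mul_left _ hL2
    have h3 : (k' + 1) * c * a < (k' + 2) * e * a := by
      calc (k' + 1) * c * a = (k' + 1) * (c * a) := by ring
        _ < (k' + 1) * ((k' + 2) * b) := h1
        _ = (k' + 2) * ((k' + 1) * b) := by ring
        _ ≤ (k' + 2) * (e * a) := h2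
        _ = (k' + 2) * e * a := by ring
    exact Nat.lt_of_mul_lt_mul_right h3
  have : c + 3 ≤ k' + 2 + 2 * e := by nlinarith
  omega

variable [Fintype V] [DecidableEq V] [DecidableRel G.Adj]

/-- number of `j`-cliques inside `S` -/
private def NcAux (G : SimpleGraph V) [DecidableRel G.Adj] (j : ℕ) (S : Finset V) : ℕ :=
  ((G.cliqueFinset j).filter (fun s => s ⊆ S)).card

/-- number of `j`-cliques inside `S` containing `v` -/
private def NcVAux (G : SimpleGraph V) [DecidableRel G.Adj] (j : ℕ) (S : Finset V) (v : V) : ℕ :=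
  ((G.cliqueFinset j).filter (fun s => s ⊆ S ∧ v ∈ s)).card

private lemma aux_Nc_erase (j : ℕ) (S : Finset V) (v : V) :
    NcAux G j S = NcAux G j (S.erase v) + NcVAux G j S v := by
  unfold NcAux NcVAux
  have key := Finset.card_filter_add_card_filter_not
    (s := (G.cliqueFinset j).filter (fun s => s ⊆ S)) (p := fun s => v ∈ s)
  simp only [Finset.filter_filter] at key
  have e1 : (G.cliqueFinset j).filter (fun s => s ⊆ S ∧ ¬ v ∈ s)
      = (G.cliqueFinset j).filter (fun s => s ⊆ S.erase v) :=
    Finset.filter_congr (fun s _ => by simp [Finset.subset_erase])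
  rw [e1] at key
  omega

omit [Fintype V] [DecidableRel G.Adj] in
private lemma aux_pair_count (𝔄 𝔅 : Finset (Finset V)) :
    ∑ B ∈ 𝔅, (𝔄.filter (· ⊆ B)).card = ∑ A ∈ 𝔄, (𝔅.filter (A ⊆ ·)).card := by
  simp only [Finset.card_filter]
  exact Finset.sum_comm

omit [Fintype V] [DecidableRel G.Adj] in
private lemma aux_ext_card_le (j : ℕ) (A : Finset V) (hA : A.card = j) (X : Finset V)
    (𝔅 : Finset (Finset V))
    (h𝔅 : ∀ B ∈ 𝔅, A ⊆ B ∧ B.card = j + 1 ∧ B \ A ⊆ X) :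
    𝔅.card ≤ (X \ A).card := by
  have h : 𝔅.card ≤ ((X \ A).powersetCard 1).card := by
    apply Finset.card_le_card_of_injOn (fun B => B \ A)
    · intro B hB
      obtain ⟨h1, h2, h3⟩ := h𝔅 B hB
      simp only [Finset.mem_coe, Finset.mem_powersetCard]
      constructor
      · intro w hw
        rw [Finset.mem_sdiff] at hw ⊢
        exact ⟨h3 (by rw [Finset.mem_sdiff]; exact hw), hw.2⟩
      · rw [Finset.card_sdiff_of_subset h1, hA, h2]; omega
    · intro B hB B' hB' heq
      have h1 := (h𝔅 B (by simpa using hB)).1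
      have h1' := (h𝔅 B' (by simpa using hB')).1
      simp only at heq
      have : A ∪ B \ A = A ∪ B' \ A := by rw [heq]
      rwa [Finset.union_sdiff_of_subset h1, Finset.union_sdiff_of_subset h1'] at this
  rwa [Finset.card_powersetCard, Nat.choose_one_right] at h

/-- L1 : trivial extension double count inside a set `W`. -/
private lemma aux_L1 (j : ℕ) (W : Finset V) :
    (j + 1) * NcAux G (j+1) W ≤ (W.card - j) * NcAux G j W := by
  set 𝔄 := (G.cliqueFinset j).filter (fun s => s ⊆ W) with h𝔄
  set 𝔅 := (G.cliqueFinset (j+1)).filter (fun s => s ⊆ W) with h𝔅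
  have hBmem : ∀ B ∈ 𝔅, G.IsNClique (j+1) B ∧ B ⊆ W := by
    intro B hB
    simpa [h𝔅, SimpleGraph.mem_cliqueFinset_iff] using hB
  have hAmem : ∀ A ∈ 𝔄, G.IsNClique j A ∧ A ⊆ W := by
    intro A hA
    simpa [h𝔄, SimpleGraph.mem_cliqueFinset_iff] using hA
  have hcount : ∀ B ∈ 𝔅, (𝔄.filter (· ⊆ B)).card = j + 1 := by
    intro B hBm
    obtain ⟨hBcl, hBW⟩ := hBmem B hBm
    have : 𝔄.filter (· ⊆ B) = B.powersetCard j := by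
      ext A
      simp only [h𝔄, Finset.mem_filter, SimpleGraph.mem_cliqueFinset_iff,
        Finset.mem_powersetCard]
      constructor
      · rintro ⟨⟨hcl, _⟩, hAB⟩; exact ⟨hAB, hcl.2⟩
      · rintro ⟨hAB, hcard⟩
        exact ⟨⟨⟨hBcl.isClique.subset (Finset.coe_subset.mpr hAB), hcard⟩, hAB.trans hBW⟩, hAB⟩
    rw [this, Finset.card_powersetCard, hBcl.2, Nat.choose_succ_self_right]
  calc (j+1) * NcAux G (j+1) W = ∑ _B ∈ 𝔅, (j+1) := by
        rw [Finset.sum_const, smul_eq_mul, mul_comm]; rfl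
    _ = ∑ B ∈ 𝔅, (𝔄.filter (· ⊆ B)).card := (Finset.sum_congr rfl (fun B hBm => (hcount B hBm).symm))
    _ = ∑ A ∈ 𝔄, (𝔅.filter (A ⊆ ·)).card := aux_pair_count 𝔄 𝔅
    _ ≤ ∑ _A ∈ 𝔄, (W.card - j) := by
        apply Finset.sum_le_sum
        intro A hAm
        obtain ⟨hAcl, hAW⟩ := hAmem A hAm
        have hle : (𝔅.filter (A ⊆ ·)).card ≤ (W \ A).card := by
          apply aux_ext_card_le j A hAcl.2 W
          intro B hBm
          rw [Finset.mem_filter] at hBm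
          obtain ⟨hBcl, hBW⟩ := hBmem B hBm.1
          exact ⟨hBm.2, hBcl.2, (Finset.sdiff_subset).trans hBW⟩
        rw [Finset.card_sdiff_of_subset hAW, hAcl.2] at hle
        exact hle
    _ = (W.card - j) * NcAux G j W := by rw [Finset.sum_const, smul_eq_mul, mul_comm]; rfl

/-- L2 : local double count at a vertex `v`. -/
private lemma aux_L2 (j : ℕ) (hj : 1 ≤ j) (S : Finset V) (v : V) :
    j * NcVAux G (j+1) S v ≤ ((S.filter (G.Adj v)).card - (j-1)) * NcVAux G j S v := by
  set X := S.filter (G.Adj v) with hX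
  set 𝔄 := (G.cliqueFinset j).filter (fun s => s ⊆ S ∧ v ∈ s) with h𝔄
  set 𝔅 := (G.cliqueFinset (j+1)).filter (fun s => s ⊆ S ∧ v ∈ s) with h𝔅
  have hBmem : ∀ B ∈ 𝔅, G.IsNClique (j+1) B ∧ B ⊆ S ∧ v ∈ B := by
    intro B hB
    have := Finset.mem_filter.mp hB
    exact ⟨SimpleGraph.mem_cliqueFinset_iff.mp this.1, this.2⟩
  have hAmem : ∀ A ∈ 𝔄, G.IsNClique j A ∧ A ⊆ S ∧ v ∈ A := by
    intro A hA
    have := Finset.mem_filter.mp hA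
    exact ⟨SimpleGraph.mem_cliqueFinset_iff.mp this.1, this.2⟩
  have hcount : ∀ B ∈ 𝔅, (𝔄.filter (· ⊆ B)).card = j := by
    intro B hBm
    obtain ⟨hBcl, hBS, hvB⟩ := hBmem B hBm
    have hcard : (𝔄.filter (· ⊆ B)).card = ((B.erase v).powersetCard (j-1)).card := by
      apply Finset.card_bij' (fun A _ => A.erase v) (fun C _ => insert v C)
      · intro A hA
        rw [Finset.mem_filter] at hA
        exact Finset.insert_erase (hAmem A hA.1).2.2
      · intro C hC
        rw [Finset.mem_powersetCard] at hC
        exact Finset.erase_insert (fun h => (Finset.mem_erase.mp (hC.1 h)).1 rfl)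
      · intro A hA
        rw [Finset.mem_filter] at hA
        obtain ⟨hAcl, hAS, hvA⟩ := hAmem A hA.1
        rw [Finset.mem_powersetCard]
        exact ⟨Finset.erase_subset_erase v hA.2, by rw [Finset.card_erase_of_mem hvA, hAcl.2]⟩
      · intro C hC
        rw [Finset.mem_powersetCard] at hC
        obtain ⟨hCB, hCcard⟩ := hC
        have hvC : v ∉ C := fun h => (Finset.mem_erase.mp (hCB h)).1 rfl
        have hsubB : insert v C ⊆ B := Finset.insert_subset hvB (hCB.trans (Finset.erase_subset v B))
        rw [Finset.mem_filter, h𝔄, Finset.mem_filter, SimpleGraph.mem_cliqueFinset_iff]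
        refine ⟨⟨⟨hBcl.isClique.subset (Finset.coe_subset.mpr hsubB), ?_⟩,
          hsubB.trans hBS, Finset.mem_insert_self v C⟩, hsubB⟩
        rw [Finset.card_insert_of_notMem hvC, hCcard]
        omega
    rw [hcard, Finset.card_powersetCard, Finset.card_erase_of_mem hvB, hBcl.2]
    have h1 : j + 1 - 1 = (j - 1) + 1 := by omega
    rw [h1, Nat.choose_succ_self_right]
    omega
  calc j * NcVAux G (j+1) S v = ∑ _B ∈ 𝔅, j := by
        rw [Finset.sum_const, smul_eq_mul, mul_comm]; rfl
    _ = ∑ B ∈ 𝔅, (𝔄.filter (· ⊆ B)).card := (Finset.sum_congr rfl (fun B hBm => (hcount B hBm).symm))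
    _ = ∑ A ∈ 𝔄, (𝔅.filter (A ⊆ ·)).card := aux_pair_count 𝔄 𝔅
    _ ≤ ∑ _A ∈ 𝔄, (X.card - (j-1)) := by
        apply Finset.sum_le_sum
        intro A hAm
        obtain ⟨hAcl, hAS, hvA⟩ := hAmem A hAm
        have hle : (𝔅.filter (A ⊆ ·)).card ≤ (X \ A).card := by
          apply aux_ext_card_le j A hAcl.2 X
          intro B hBm
          rw [Finset.mem_filter] at hBm
          obtain ⟨hBcl, hBS, hvB⟩ := hBmem B hBm.1
          refine ⟨hBm.2, hBcl.2, ?_⟩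
          intro w hw
          rw [Finset.mem_sdiff] at hw
          rw [hX, Finset.mem_filter]
          have hwv : w ≠ v := fun h => hw.2 (h ▸ hvA)
          exact ⟨hBS hw.1, hBcl.isClique (by exact_mod_cast hBm.2 hvA)
            (by exact_mod_cast hw.1) (Ne.symm hwv)⟩
        have h2 : (X \ A).card ≤ X.card - (j-1) := by
          have hsub : A.erase v ⊆ X := by
            intro a ha
            rw [Finset.mem_erase] at ha
            rw [hX, Finset.mem_filter]
            exact ⟨hAS ha.2, hAcl.isClique (by exact_mod_cast hvA)
              (by exact_mod_cast ha.2) (Ne.symm ha.1)⟩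
          have hmono : X \ A ⊆ X \ (A.erase v) :=
            Finset.sdiff_subset_sdiff (le_refl X) (Finset.erase_subset v A)
          calc (X \ A).card ≤ (X \ (A.erase v)).card := Finset.card_le_card hmono
            _ = X.card - (j-1) := by
                rw [Finset.card_sdiff_of_subset hsub, Finset.card_erase_of_mem hvA, hAcl.2]
        exact hle.trans h2
    _ = (X.card - (j-1)) * NcVAux G j S v := by rw [Finset.sum_const, smul_eq_mul, mul_comm]; rfl

private lemma aux_Nc_split (j : ℕ) (hj : 1 ≤ j) (S W : Finset V) (hWS : W ⊆ S)
    (hcl : ∀ y ∈ S, y ∉ W → ∀ z ∈ W, ¬ G.Adj y z) :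
    NcAux G j S = NcAux G j W + NcAux G j (S \ W) := by
  unfold NcAux
  have key := Finset.card_filter_add_card_filter_not
    (s := (G.cliqueFinset j).filter (fun s => s ⊆ S)) (p := fun s => s ⊆ W)
  simp only [Finset.filter_filter] at key
  have e1 : (G.cliqueFinset j).filter (fun s => s ⊆ S ∧ s ⊆ W)
      = (G.cliqueFinset j).filter (fun s => s ⊆ W) :=
    Finset.filter_congr (fun s _ => ⟨fun h => h.2, fun h => ⟨h.trans hWS, h⟩⟩)
  have e2 : (G.cliqueFinset j).filter (fun s => s ⊆ S ∧ ¬ s ⊆ W)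
      = (G.cliqueFinset j).filter (fun s => s ⊆ S \ W) := by
    apply Finset.filter_congr
    intro s hs
    rw [SimpleGraph.mem_cliqueFinset_iff] at hs
    constructor
    · rintro ⟨hsS, hsW⟩
      intro x hx
      rw [Finset.mem_sdiff]
      refine ⟨hsS hx, fun hxW => ?_⟩
      obtain ⟨y, hys, hyW⟩ := Finset.not_subset.mp hsW
      have hne : y ≠ x := fun h => hyW (h ▸ hxW)
      exact hcl y (hsS hys) hyW x hxW
        (hs.isClique (Finset.mem_coe.mpr hys) (Finset.mem_coe.mpr hx) hne)
    · intro hsSW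
      have hsne : s.Nonempty := by
        rw [← Finset.card_pos, hs.2]; omega
      obtain ⟨x, hx⟩ := hsne
      refine ⟨hsSW.trans (Finset.sdiff_subset), fun hsW => ?_⟩
      have hmem := hsSW hx
      rw [Finset.mem_sdiff] at hmem
      exact hmem.2 (hsW hx)
  rw [e1, e2] at key
  omega

private lemma aux_exists_closed_window (l : ℕ) (hl2 : 2 ≤ l)
    (hml : ∀ q : List V, q.Chain' G.Adj → q.Nodup → q.length < l)
    (S : Finset V) (hSne : S.Nonempty)
    (hdeg : ∀ v ∈ S, l - 1 ≤ 2 * (S.filter (G.Adj v)).card) :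
    ∃ W : Finset V, W ⊆ S ∧ W.Nonempty ∧ W.card + 1 ≤ l ∧
      ∀ y ∈ S, y ∉ W → ∀ z ∈ W, ¬ G.Adj y z := by
  classical
  set PP : Set (List V) := {q | q.Chain' G.Adj ∧ q.Nodup ∧ ∀ x ∈ q, x ∈ S} with hPP
  have hfin : PP.Finite := (List.finite_length_le V (Fintype.card V)).subset
    (fun q hq => hq.2.1.length_le_card)
  obtain ⟨v0, hv0⟩ := hSne
  have hsingle : [v0] ∈ PP := ⟨List.isChain_singleton v0, List.nodup_singleton v0,
    fun x hx => by rw [List.mem_singleton] at hx; rwa [hx]⟩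
  obtain ⟨p, hp, hmaxw⟩ := Set.Finite.exists_maximalFor List.length PP hfin ⟨[v0], hsingle⟩
  obtain ⟨hpc, hpnd, hpS⟩ := hp
  have hpne : p ≠ [] := by
    intro h
    have := hmaxw (j := [v0]) hsingle (by simp [h])
    rw [h] at this; simp at this
  set m := p.length with hm
  have hm1 : 1 ≤ m := List.length_pos_iff.mpr hpne
  have hmlel : m < l := hml p hpc hpnd
  have hmax : ∀ q : List V, q.Chain' G.Adj → q.Nodup → (∀ x ∈ q, x ∈ S) → q.length ≤ m := by
    intro q h1 h2 h3
    by_contra hq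
    push_neg at hq
    have := hmaxw (j := q) ⟨h1, h2, h3⟩ (le_of_lt hq)
    omega
  set x1 := p.head hpne with hx1
  set xm := p.getLast hpne with hxm
  set xi : ℕ → V := fun i => p.getD i x1 with hxidef
  have hxi : ∀ {i : ℕ} (h : i < m), xi i = p[i]'h := fun {i} h => List.getD_eq_getElem p x1 h
  have hx1mem : x1 ∈ S := hpS x1 (List.head_mem hpne)
  have hxmmem : xm ∈ S := hpS xm (List.getLast_mem hpne)
  have hx10 : x1 = p[0]'(by omega) := List.head_eq_getElem hpne
  have hxmm : xm = p[m-1]'(by omega) := List.getLast_eq_getElem hpne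
  have hHead : ∀ u ∈ S, G.Adj u x1 → u ∈ p := by
    intro u hu hadj
    by_contra hup
    have hle := hmax (u :: p) ?_ ?_ ?_
    · simp [hm] at hle
    · refine List.isChain_cons.mpr ?_
      refine ⟨fun b hb => ?_, hpc⟩
      rw [List.head?_eq_head hpne] at hb
      rw [Option.mem_some_iff] at hb
      rw [hx1] at hadj
      rwa [hb] at hadj
    · rw [List.nodup_cons]; exact ⟨hup, hpnd⟩
    · intro x hx
      rcases List.mem_cons.mp hx with h | h
      · rwa [h]
      · exact hpS x h
  have hLast : ∀ u ∈ S, G.Adj xm u → u ∈ p := by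
    intro u hu hadj
    by_contra hup
    have hle := hmax (p ++ [u]) ?_ ?_ ?_
    · simp [hm] at hle
    · refine List.isChain_append.mpr ?_
      refine ⟨hpc, List.isChain_singleton u, fun a ha b hb => ?_⟩
      rw [List.getLast?_eq_getLast hpne, Option.mem_some_iff] at ha
      rw [List.head?_cons, Option.mem_some_iff] at hb
      rw [hxm] at hadj
      rw [ha, hb] at hadj
      exact hadj
    · rw [List.nodup_append]
      exact ⟨hpnd, List.nodup_singleton u, fun a haa b hab hEq => by
        rw [List.mem_singleton] at hab; rw [hEq, hab] at haa; exact hup haa⟩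
    · intro x hx
      rcases List.mem_append.mp hx with h | h
      · exact hpS x h
      · rw [List.mem_singleton] at h; rwa [h]
  set I : Finset ℕ := (Finset.range (m-1)).filter (fun i => G.Adj x1 (xi (i+1))) with hIdef
  set J : Finset ℕ := (Finset.range (m-1)).filter (fun i => G.Adj xm (xi i)) with hJdef
  have keyIdx : ∀ u ∈ p, (List.idxOf u p < m ∧ xi (List.idxOf u p) = u) := by
    intro u hu
    have h1 : List.idxOf u p < m := List.idxOf_lt_length_iff.mpr hu
    exact ⟨h1, by rw [hxi h1]; exact List.getElem_idxOf h1⟩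
  have hcardI : (S.filter (G.Adj x1)).card ≤ I.card := by
    have hfacts : ∀ u ∈ S.filter (G.Adj x1),
        u ∈ p ∧ List.idxOf u p ≠ 0 ∧ List.idxOf u p < m ∧ xi (List.idxOf u p) = u := by
      intro u hu
      rw [Finset.mem_filter] at hu
      have hup : u ∈ p := hHead u hu.1 (G.adj_symm hu.2)
      obtain ⟨hlt, hget⟩ := keyIdx u hup
      refine ⟨hup, ?_, hlt, hget⟩
      intro h0
      rw [h0] at hget
      have : xi 0 = x1 := by rw [hxi (by omega : 0 < m)]; exact hx10.symm
      rw [this] at hget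
      rw [← hget] at hu
      exact G.irrefl hu.2
    apply Finset.card_le_card_of_injOn (fun u => List.idxOf u p - 1)
    · intro u hu
      simp only [Finset.mem_coe] at hu ⊢
      obtain ⟨hup, h0, hlt, hget⟩ := hfacts u hu
      rw [Finset.mem_filter] at hu
      rw [hIdef, Finset.mem_filter, Finset.mem_range]
      refine ⟨by omega, ?_⟩
      have : List.idxOf u p - 1 + 1 = List.idxOf u p := by omega
      rw [this, hget]
      exact hu.2
    · intro u hu u' hu' heq
      obtain ⟨_, h0, _, hget⟩ := hfacts u (by simpa using hu)
      obtain ⟨_, h0', _, hget'⟩ := hfacts u' (by simpa using hu')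
      simp only at heq
      have : List.idxOf u p = List.idxOf u' p := by omega
      rw [← hget, ← hget', this]
  have hcardJ : (S.filter (G.Adj xm)).card ≤ J.card := by
    have hfacts : ∀ u ∈ S.filter (G.Adj xm),
        u ∈ p ∧ List.idxOf u p ≠ m - 1 ∧ List.idxOf u p < m ∧ xi (List.idxOf u p) = u := by
      intro u hu
      rw [Finset.mem_filter] at hu
      have hup : u ∈ p := hLast u hu.1 hu.2
      obtain ⟨hlt, hget⟩ := keyIdx u hup
      refine ⟨hup, ?_, hlt, hget⟩
      intro h0
      rw [h0] at hget
      have : xi (m-1) = xm := by rw [hxi (by omega : m - 1 < m)]; exact hxmm.symm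
      rw [this] at hget
      rw [← hget] at hu
      exact G.irrefl hu.2
    apply Finset.card_le_card_of_injOn (fun u => List.idxOf u p)
    · intro u hu
      simp only [Finset.mem_coe] at hu ⊢
      obtain ⟨hup, h0, hlt, hget⟩ := hfacts u hu
      rw [Finset.mem_filter] at hu
      rw [hJdef, Finset.mem_filter, Finset.mem_range]
      refine ⟨by omega, ?_⟩
      rw [hget]
      exact hu.2
    · intro u hu u' hu' heq
      obtain ⟨_, _, _, hget⟩ := hfacts u (by simpa using hu)
      obtain ⟨_, _, _, hget'⟩ := hfacts u' (by simpa using hu')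
      simp only at heq
      rw [← hget, ← hget', heq]
  have hIJ : (I ∩ J).Nonempty := by
    rw [← Finset.card_pos]
    have hsub : I ∪ J ⊆ Finset.range (m-1) :=
      Finset.union_subset (Finset.filter_subset _ _) (Finset.filter_subset _ _)
    have h2 : (I ∪ J).card ≤ m - 1 := by
      have := Finset.card_le_card hsub
      rwa [Finset.card_range] at this
    have h3 := Finset.card_union_add_card_inter I J
    have hd1 := hdeg x1 hx1mem
    have hdm := hdeg xm hxmmem
    omega
  obtain ⟨i, hiIJ⟩ := hIJ
  rw [Finset.mem_inter] at hiIJ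
  have hiI := hiIJ.1
  have hiJ := hiIJ.2
  rw [hIdef, Finset.mem_filter, Finset.mem_range] at hiI
  rw [hJdef, Finset.mem_filter] at hiJ
  obtain ⟨hilt, hAdj1⟩ := hiI
  have hAdjm := hiJ.2
  set C : List V := p.take (i+1) ++ (p.drop (i+1)).reverse with hCdef
  have htlen : (p.take (i+1)).length = i + 1 := by rw [List.length_take]; omega
  have hdlen : (p.drop (i+1)).length = m - (i+1) := by rw [List.length_drop]
  have htne : p.take (i+1) ≠ [] := by
    intro h; rw [h] at htlen; simp at htlen
  have hdne : p.drop (i+1) ≠ [] := by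
    intro h; rw [h] at hdlen; simp at hdlen; omega
  have hpermC : C.Perm p := by
    have h1 : C.Perm (p.take (i+1) ++ p.drop (i+1)) :=
      List.Perm.append_left _ (List.reverse_perm _)
    rwa [List.take_append_drop] at h1
  have hCchain : C.Chain' G.Adj := by
    rw [hCdef]
    refine List.isChain_append.mpr ?_
    refine ⟨hpc.take _, ?_, ?_⟩
    · rw [List.isChain_reverse]
      exact (hpc.drop _).imp (fun a b h => h.symm)
    · intro a ha b hb
      have ha' : a = xi i := by
        rw [List.getLast?_eq_getElem?, htlen] at ha
        simp only [Nat.add_sub_cancel] at ha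
        rw [List.getElem?_eq_getElem (by rw [htlen]; omega)] at ha
        rw [Option.mem_some_iff] at ha
        rw [← ha, List.getElem_take, ← hxi (by omega : i < m)]
      have hb' : b = xm := by
        rw [List.head?_reverse, List.getLast?_eq_getElem?, hdlen] at hb
        rw [List.getElem?_eq_getElem (by rw [hdlen]; omega)] at hb
        rw [Option.mem_some_iff] at hb
        rw [← hb, List.getElem_drop, hxmm]
        congr 1
        omega
      rw [ha', hb']
      exact G.adj_symm hAdjm
  have hCnd : C.Nodup := hpermC.nodup_iff.mpr hpnd
  have hCcyc : ∀ x ∈ C.getLast?, ∀ y ∈ C.head?, G.Adj x y := by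
    intro a ha b hb
    have ha' : a = xi (i+1) := by
      rw [hCdef, List.getLast?_append, List.getLast?_reverse, List.head?_drop] at ha
      rw [List.getElem?_eq_getElem (by omega : i + 1 < p.length)] at ha
      simp only [Option.or_some, Option.some_or, Option.mem_def, Option.some.injEq] at ha
      rw [← ha, ← hxi (by omega : i + 1 < m)]
    have hb' : b = x1 := by
      rw [hCdef, List.head?_append, List.head?_eq_getElem?, List.getElem?_eq_getElem
        (by rw [htlen]; omega : 0 < (p.take (i+1)).length)] at hb
      rw [show ∀ (c : V) (o : Option V), (some c).or o = some c from fun _ _ => rfl] at hb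
      rw [Option.mem_def, Option.some.injEq] at hb
      rw [← hb, List.getElem_take, ← hx10]
    rw [ha', hb']
    exact G.adj_symm hAdj1
  refine ⟨p.toFinset, ?_, ⟨x1, List.mem_toFinset.mpr (List.head_mem hpne)⟩, ?_, ?_⟩
  · intro x hx; exact hpS x (List.mem_toFinset.mp hx)
  · rw [List.toFinset_card_of_nodup hpnd]; omega
  · intro y hyS hyW z hzW hadjyz
    have hzC : z ∈ C := hpermC.mem_iff.mpr (List.mem_toFinset.mp hzW)
    have hyC : y ∉ C := fun h => hyW (List.mem_toFinset.mpr (hpermC.mem_iff.mp h))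
    obtain ⟨L, hLc, hLnd, hLlen, hLmem⟩ := aux_rotate_path C hCchain hCnd hCcyc y z hyC hzC hadjyz
    have hle := hmax L hLc hLnd ?_
    · rw [hLlen, hpermC.length_eq] at hle
      omega
    · intro x hx
      rcases hLmem x hx with h | h
      · rwa [h]
      · exact hpS x (hpermC.mem_iff.mp h)

/-- Main induction. -/
private lemma aux_main (l k : ℕ) (hk : 2 ≤ k) (hlk : k + 1 ≤ l)
    (hml : ∀ q : List V, q.Chain' G.Adj → q.Nodup → q.length < l) :
    ∀ S : Finset V, k * NcAux G k S ≤ (l - k) * NcAux G (k - 1) S := by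
  intro S
  induction S using Finset.strongInductionOn with
  | _ S ih =>
  by_cases hgood : ∃ v ∈ S, k * NcVAux G k S v ≤ (l - k) * NcVAux G (k-1) S v
  · obtain ⟨v, hvS, hgv⟩ := hgood
    rw [aux_Nc_erase k S v, aux_Nc_erase (k-1) S v, Nat.mul_add, Nat.mul_add]
    exact Nat.add_le_add (ih (S.erase v) (Finset.erase_ssubset hvS)) hgv
  · push_neg at hgood
    rcases Finset.eq_empty_or_nonempty S with rfl | hSne
    · have h0 : NcAux G k ∅ = 0 := by
        unfold NcAux
        rw [Finset.card_eq_zero, Finset.filter_eq_empty_iff]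
        intro s hs hsub
        rw [SimpleGraph.mem_cliqueFinset_iff] at hs
        have hse := Finset.subset_empty.mp hsub
        rw [hse] at hs
        have := hs.2
        simp at this
        omega
      simp [h0]
    · have hdeg : ∀ v ∈ S, l - 1 ≤ 2 * ((S.filter (G.Adj v)).card) := by
        intro v hvS
        have hrich := hgood v hvS
        have hL2 := aux_L2 (G := G) (k-1) (by omega) S v
        have e1 : k - 1 + 1 = k := by omega
        have e2 : k - 1 - 1 = k - 2 := by omega
        rw [e1, e2] at hL2
        exact aux_rich_arith k l _ _ _ hk hlk hrich hL2
      obtain ⟨W, hWS, hWne, hWcard, hWclosed⟩ :=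
        aux_exists_closed_window (G := G) l (by omega) hml S hSne hdeg
      have hsplitk := aux_Nc_split k (by omega) S W hWS hWclosed
      have hsplitk1 := aux_Nc_split (k-1) (by omega) S W hWS hWclosed
      rw [hsplitk, hsplitk1, Nat.mul_add, Nat.mul_add]
      apply Nat.add_le_add
      · have h1 := aux_L1 (G := G) (k-1) W
        have hk1 : k - 1 + 1 = k := by omega
        rw [hk1] at h1
        refine h1.trans (Nat.mul_le_mul_right _ ?_)
        omega
      · exact ih (S \ W) (Finset.sdiff_ssubset hWS hWne)

end Aux

/-- `cliqueCount G j` is `N_j(G)`, the number of `j`-vertex cliques (copies of `K_j`) in `G`. -/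
noncomputable def cliqueCount {V : Type*} (G : SimpleGraph V) (j : ℕ) : ℕ :=
  Set.ncard {s : Finset V | G.IsNClique j s}

/-- If `G` has no path on `l` vertices (where `l ≥ 2`), then for every
`k` with `2 ≤ k ≤ ω(G)` one has `k·N_k(G) ≤ (l-k)·N_{k-1}(G)`. -/
theorem cliqueCount_ratio_of_no_long_path {V : Type*} [Fintype V] (G : SimpleGraph V)
    (l : ℕ) (hl : 2 ≤ l)
    (hG : ¬ ∃ (u v : V) (p : G.Walk u v), p.IsPath ∧ p.length + 1 = l)
    (k : ℕ) (hk2 : 2 ≤ k) (hkω : k ≤ G.cliqueNum) :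
    (k : ℤ) * cliqueCount G k ≤ ((l : ℤ) - k) * cliqueCount G (k - 1) := by
  letI : DecidableEq V := Classical.decEq V
  letI : DecidableRel G.Adj := Classical.decRel _
  have hml : ∀ q : List V, q.Chain' G.Adj → q.Nodup → q.length < l :=
    aux_no_long_list_path l hG (by omega)
  obtain ⟨s, hs⟩ := G.exists_isNClique_cliqueNum
  obtain ⟨t, hts, htcard⟩ := Finset.exists_subset_card_eq (n := k) (by rw [hs.2]; exact hkω)
  have htcl : G.IsNClique k t := ⟨hs.isClique.subset (Finset.coe_subset.mpr hts), htcard⟩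
  have hlk : k + 1 ≤ l := by
    by_contra hcon
    push_neg at hcon
    have hpair : List.Pairwise G.Adj t.toList := by
      rw [List.pairwise_iff_get]
      intro i j hij
      apply htcl.isClique
      · exact Finset.mem_coe.mpr (Finset.mem_toList.mp (List.get_mem t.toList _))
      · exact Finset.mem_coe.mpr (Finset.mem_toList.mp (List.get_mem t.toList _))
      · intro h
        exact absurd ((t.nodup_toList.get_inj_iff).mp h) (Fin.ne_of_lt hij)
    have hlen := hml t.toList hpair.isChain t.nodup_toList
    rw [Finset.length_toList, htcard] at hlen
    omega
  have hfin := aux_main l k hk2 hlk hml Finset.univ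
  have hNc : ∀ j, NcAux G j Finset.univ = cliqueCount G j := by
    intro j
    unfold NcAux cliqueCount
    rw [Finset.filter_true_of_mem (fun _ _ => Finset.subset_univ _)]
    rw [← Set.ncard_coe_finset]
    congr 1
    ext s'
    simp [SimpleGraph.mem_cliqueFinset_iff]
  rw [hNc, hNc] at hfin
  calc (k : ℤ) * cliqueCount G k = ((k * cliqueCount G k : ℕ) : ℤ) := by push_cast; ring
    _ ≤ (((l - k) * cliqueCount G (k-1) : ℕ) : ℤ) := by exact_mod_cast hfin
    _ = ((l : ℤ) - k) * cliqueCount G (k-1) := by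
        push_cast [Nat.cast_sub (show k ≤ l by omega)]
        ring
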